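/- (Chain iteration for PGS, part 1.) Assume x[1] > x[k] for every k ∈ (1,n] (so x_1 is the lexicographically greatest suffix and prev₋₁[i] = max{j ∈ [1,i) : x_j ≻ x_i} exists for every i ∈ [2,n]). Define f : [1,n] → [1,n] by f(1) = 1 and f(i) = prev₋₁[i] for i ∈ [2,n]. Then for every r ∈ [2,n] there exists t ≥ 0 such that the t-fold iterate f^t(r−1) equals prev₋₁[r]. -/

import Mathlib

namespace LynArr

variable {α : Type*} [LinearOrder α]

/-- Strict lexicographic order on words:
`u ≺ v` iff `u` is a proper prefix of `v`, or at the first differing position `u` is smaller. -/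
def Llt (u v : List α) : Prop := List.Lex (· < ·) u v

/-- The suffix `x_i = x[i..n]` (1-based indexing). -/
def suff (x : List α) (i : ℕ) : List α := x.drop (i - 1)

/-- The subword `x[i..j]` (1-based, inclusive). -/
def sub (x : List α) (i j : ℕ) : List α := (x.drop (i - 1)).take (j - i + 1)

/-- `w` is a Lyndon word: nonempty and lexicographically smaller than
all of its nonempty proper suffixes. -/
def IsLyndon (w : List α) : Prop :=
  w ≠ [] ∧ ∀ k, 0 < k → k < w.length → Llt w (w.drop k)

/-- `w` is an inverse Lyndon word: nonempty and lexicographically greater than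
all of its nonempty proper suffixes. -/
def IsInvLyndon (w : List α) : Prop :=
  w ≠ [] ∧ ∀ k, 0 < k → k < w.length → Llt (w.drop k) w

/-- `lce x i j`: the length of the longest common prefix of the suffixes `x_i` and `x_j`. -/
def lce (x : List α) (i j : ℕ) : ℕ :=
  (((suff x i).zip (suff x j)).takeWhile fun p => p.1 == p.2).length

/-- Chain iteration for PGS, part 1: if `x[1]` is strictly greater than every other
letter of `x` and `f` sends `1` to `1` and every `i ∈ [2, n]` to `prev₋₁[i]`, then for every
`r ∈ [2, n]` some iterate of `f` starting from `r - 1` reaches `prev₋₁[r] = f r`. -/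
theorem pgs_chain_iteration {α : Type*} [LinearOrder α] (x : List α) (n : ℕ)
    (hn : n = x.length) (f : ℕ → ℕ)
    (hx1 : ∀ k, (h1 : 1 < k) → (h2 : k ≤ n) → x[k - 1]'(by omega) < x[0]'(by omega))
    (hf1 : f 1 = 1)
    (hf : ∀ i, 2 ≤ i → i ≤ n →
      IsGreatest {j | 1 ≤ j ∧ j < i ∧ Llt (suff x i) (suff x j)} (f i)) :
    ∀ r, 2 ≤ r → r ≤ n → ∃ t, f^[t] (r - 1) = f r := by
  intro r hr2 hrn
  obtain ⟨⟨h1fr, hfrr, hLfr⟩, hub⟩ := hf r hr2 hrn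
  have key : ∀ c, f r ≤ c → c < r → ∃ t, f^[t] c = f r := by
    intro c
    induction c using Nat.strong_induction_on with
    | _ c ih =>
      intro hc1 hc2
      rcases eq_or_lt_of_le hc1 with he | hlt
      · exact ⟨0, he.symm⟩
      · have hcn : c ≤ n := by omega
        have hc2' : 2 ≤ c := by omega
        obtain ⟨⟨_, hfcc, _⟩, hubc⟩ := hf c hc2' hcn
        -- suff x c ≠ suff x r since lengths differ
        have hne : suff x c ≠ suff x r := by
          intro h
          have := congrArg List.length h
          simp only [suff, List.length_drop] at this
          omega
        have hnot : ¬ Llt (suff x r) (suff x c) := by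
          intro h
          have : c ≤ f r := hub ⟨by omega, hc2, h⟩
          omega
        have hcr : Llt (suff x c) (suff x r) := by
          by_contra h
          exact hne ((List.Lex.trichotomous (α := α) (· < ·)).trichotomous
            (suff x c) (suff x r) h hnot)
        have hcfr : Llt (suff x c) (suff x (f r)) := by
          rcases (List.Lex.isOrderConnected (α := α) (· < ·)).conn
            (suff x c) (suff x (f r)) (suff x r) hcr with h | h
          · exact h
          · exact absurd hLfr ((List.Lex.asymm (α := α) (· < ·)).asymm _ _ h)
        have hfrfc : f r ≤ f c := hubc ⟨h1fr, hlt, hcfr⟩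
        obtain ⟨t, ht⟩ := ih (f c) hfcc hfrfc (by omega)
        exact ⟨t + 1, by rw [Function.iterate_succ_apply, ht]⟩
  exact key (r - 1) (by omega) (by omega)

end LynArr
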